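/- In a binary matroid M, every flat of rank r(M) - 2 is contained in at most three hyperplanes. -/

import Mathlib

open Set

variable {α : Type*}

/-- A circuit: a minimal dependent set. -/
def IsCircuit (M : Matroid α) (C : Set α) : Prop :=
  M.Dep C ∧ ∀ D, D ⊂ C → M.Indep D

/-- `C` is the fundamental circuit of `x` with respect to the basis `B`:
the unique circuit contained in `B ∪ {x}`. -/
def IsFundCct (M : Matroid α) (C : Set α) (x : α) (B : Set α) : Prop :=
  IsCircuit M C ∧ x ∈ C ∧ C ⊆ insert x B

/-- `SymEx M a A B` : the elements `b ∈ B` such that `A - a + b` and `B - b + a` are bases. -/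
def SymEx (M : Matroid α) (a : α) (A B : Set α) : Set α :=
  {b ∈ B | M.IsBase (insert b (A \ {a})) ∧ M.IsBase (insert a (B \ {b}))}

/-- `ConnEx M a a' A B` : the elements `b ∈ B` such that `A - a' + b` and `B - b + a` are bases. -/
def ConnEx (M : Matroid α) (a a' : α) (A B : Set α) : Set α :=
  {b ∈ B | M.IsBase (insert b (A \ {a'})) ∧ M.IsBase (insert a (B \ {b}))}

/-- A binary matroid, via the circuit characterization: the symmetric difference of
any two distinct circuits contains a circuit. -/
def Binary (M : Matroid α) : Prop :=
  ∀ C₁ C₂, IsCircuit M C₁ → IsCircuit M C₂ → C₁ ≠ C₂ →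
    ∃ C, IsCircuit M C ∧ C ⊆ symmDiff C₁ C₂

/-- A hyperplane: a maximal proper flat. -/
def IsHyperplane (M : Matroid α) (H : Set α) : Prop :=
  M.IsFlat H ∧ H ≠ M.E ∧ ∀ F, M.IsFlat F → H ⊂ F → F = M.E

lemma exists_circuit_subset (M : Matroid α) [M.Finite] {D : Set α} (hD : M.Dep D) :
    ∃ C, C ⊆ D ∧ IsCircuit M C := by
  have hDfin : D.Finite := M.ground_finite.subset hD.subset_ground
  have hfin : {C : Set α | C ⊆ D ∧ M.Dep C}.Finite :=
    hDfin.finite_subsets.subset (fun C hC => hC.1)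
  obtain ⟨C, hCmem, hCmin'⟩ := hfin.isPWO.exists_minimal ⟨D, subset_rfl, hD⟩
  have hCmin : ∀ D', D' ∈ {C : Set α | C ⊆ D ∧ M.Dep C} → D' ⊆ C → C = D' :=
    fun D' h1 h2 => (hCmin' h1 h2).antisymm h2
  refine ⟨C, hCmem.1, hCmem.2, fun D' hD' => ?_⟩
  have hD'E : D' ⊆ M.E := hD'.subset.trans hCmem.2.subset_ground
  by_contra hind
  rw [Matroid.not_indep_iff hD'E] at hind
  have := hCmin D' ⟨hD'.subset.trans hCmem.1, hind⟩ hD'.subset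
  exact hD'.ne this.symm

lemma IsCircuit.mem_closure_diff {M : Matroid α} {C : Set α} (hC : IsCircuit M C) {e : α}
    (he : e ∈ C) : e ∈ M.closure (C \ {e}) := by
  have hI : M.Indep (C \ {e}) := hC.2 _ (sdiff_singleton_ssubset.2 he)
  rw [hI.mem_closure_iff]
  left
  rw [insert_diff_singleton, insert_eq_of_mem he]
  exact hC.1

lemma flat_closure (M : Matroid α) (X : Set α) : M.IsFlat (M.closure X) := by
  rw [Matroid.closure_def, sInter_eq_iInter]
  have hne : Nonempty ({F | M.IsFlat F ∧ X ∩ M.E ⊆ F} : Set (Set α)) :=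
    ⟨⟨M.E, M.ground_isFlat, inter_subset_right⟩⟩
  exact Matroid.IsFlat.iInter (fun F => F.2.1)

lemma hyp_eq_of_subset {M : Matroid α} {H G : Set α} (hH : IsHyperplane M H) (hG : M.IsFlat G)
    (hsub : H ⊆ G) (hne : G ≠ M.E) : H = G := by
  by_contra h
  exact hne (hH.2.2 G hG (hsub.ssubset_of_ne h))

/-- If `e ∈ H` and `insert e B₀` is independent, then `H = cl (insert e B₀)`. -/
lemma hyp_eq_closure {M : Matroid α} [M.Finite] {F B₀ H : Set α} {x y e : α}
    (hB₀ : M.IsBasis B₀ F) (hx : x ∉ B₀) (hy : y ∉ B₀) (hxy : x ≠ y)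
    (hfull : M.IsBase (insert x (insert y B₀)))
    (hH : IsHyperplane M H) (hFH : F ⊆ H)
    (heH : e ∈ H) (heI : M.Indep (insert e B₀)) (heB : e ∉ B₀) :
    H = M.closure (insert e B₀) := by
  have hHE : H ⊆ M.E := hH.1.subset_ground
  have hB₀H : B₀ ⊆ H := hB₀.subset.trans hFH
  obtain ⟨B₃, hB₃, hsub⟩ := heI.subset_isBasis_of_subset (insert_subset heH hB₀H) hHE
  have hB₃eq : B₃ = insert e B₀ := by
    by_contra hne
    obtain ⟨w, hwB₃, hwn⟩ := exists_of_ssubset (hsub.ssubset_of_ne (Ne.symm hne))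
    set S := insert w (insert e B₀) with hS
    have hSind : M.Indep S := hB₃.indep.subset (insert_subset hwB₃ hsub)
    obtain ⟨B', hB', hSB'⟩ := hSind.exists_isBase_superset
    have hcard : B'.encard = S.encard := by
      rw [hB'.encard_eq_encard_of_isBase hfull, hS,
        encard_insert_of_notMem hwn, encard_insert_of_notMem heB,
        encard_insert_of_notMem, encard_insert_of_notMem hy]
      simp [hxy, hx]
    have hSB : S = B' := (M.ground_finite.subset hB'.subset_ground).eq_of_subset_of_encard_le'
      hSB' hcard.le
    have hSbase : M.IsBase S := hSB ▸ hB'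
    have hSsubH : S ⊆ H := insert_subset (hB₃.subset hwB₃) (insert_subset heH hB₀H)
    have : M.E ⊆ H := by
      rw [← hSbase.closure_eq]
      calc M.closure S ⊆ M.closure H := M.closure_subset_closure hSsubH
        _ = H := hH.1.closure
    exact hH.2.1 (hHE.antisymm this)
  rw [← hB₃eq, ← hH.1.closure, hB₃.closure_eq_closure]

/-- Every hyperplane containing `F` is the closure of `B₀` plus one element. -/
lemma hyp_exists_z {M : Matroid α} [M.Finite] {F B₀ H : Set α} {x y : α}
    (hF : M.IsFlat F) (hB₀ : M.IsBasis B₀ F) (hx : x ∉ B₀) (hy : y ∉ B₀) (hxy : x ≠ y)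
    (hfull : M.IsBase (insert x (insert y B₀)))
    (hH : IsHyperplane M H) (hFH : F ⊆ H) :
    ∃ z, z ∈ H ∧ z ∉ F ∧ z ∉ B₀ ∧ M.Indep (insert z B₀) ∧
      H = M.closure (insert z B₀) := by
  have hHE : H ⊆ M.E := hH.1.subset_ground
  have hB₀H : B₀ ⊆ H := hB₀.subset.trans hFH
  have hfullE : insert x (insert y B₀) ⊆ M.E := hfull.subset_ground
  have hxE : x ∈ M.E := hfullE (mem_insert _ _)
  have hyE : y ∈ M.E := hfullE (mem_insert_of_mem _ (mem_insert _ _))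
  have hxB₀I : M.Indep (insert x B₀) :=
    hfull.indep.subset (insert_subset (mem_insert _ _)
      (fun a ha => mem_insert_of_mem _ (mem_insert_of_mem _ ha)))
  have hFcl : F = M.closure B₀ := by rw [hB₀.closure_eq_closure, hF.closure]
  obtain ⟨B₃, hB₃, hsub⟩ := hB₀.indep.subset_isBasis_of_subset hB₀H hHE
  have hne : B₃ ≠ B₀ := by
    intro h
    have hHF : H = F := by rw [← hH.1.closure, ← hB₃.closure_eq_closure, h, ← hFcl]
    have hxnH : x ∉ H := by
      rw [hHF, hFcl]
      intro hmem
      rcases (hB₀.indep.mem_closure_iff).1 hmem with hdep | hmem'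
      · exact hdep.not_indep hxB₀I
      · exact hx hmem'
    have hGflat : M.IsFlat (M.closure (insert x B₀)) := flat_closure M _
    have hssub : H ⊂ M.closure (insert x B₀) := by
      constructor
      · rw [hHF, hFcl]
        exact M.closure_subset_closure (subset_insert _ _)
      · intro hcon
        exact hxnH (hcon (M.subset_closure _ (insert_subset hxE
          (hB₀.indep.subset_ground)) (mem_insert _ _)))
    have hGE := hH.2.2 _ hGflat hssub
    have : y ∈ M.closure (insert x B₀) := hGE ▸ hyE
    rcases (hxB₀I.mem_closure_iff).1 this with hdep | hmem'
    · refine hdep.not_indep (hfull.indep.subset ?_)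
      rw [insert_comm]
    · rcases hmem' with h | h
      · exact hxy.symm h
      · exact hy h
  obtain ⟨z, hzB₃, hznB₀⟩ := exists_of_ssubset (hsub.ssubset_of_ne (Ne.symm hne))
  have hzind : M.Indep (insert z B₀) := hB₃.indep.subset (insert_subset hzB₃ hsub)
  have hzH : z ∈ H := hB₃.subset hzB₃
  have hznF : z ∉ F := by
    rw [hFcl]
    intro hmem
    rcases (hB₀.indep.mem_closure_iff).1 hmem with hdep | hmem'
    · exact hdep.not_indep hzind
    · exact hznB₀ hmem'
  exact ⟨z, hzH, hznF, hznB₀, hzind,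
    hyp_eq_closure hB₀ hx hy hxy hfull hH hFH hzH hzind hznB₀⟩

theorem stmt_19 (M : Matroid α) [M.Finite] {F B₀ : Set α} {x y : α}
    (hM : Binary M) (hF : M.IsFlat F) (hB₀ : M.IsBasis B₀ F)
    -- `F` has rank `r(M) - 2` : a basis of `F` extends to a basis of `M` by two elements
    (hx : x ∉ B₀) (hy : y ∉ B₀) (hxy : x ≠ y) (hfull : M.IsBase (insert x (insert y B₀))) :
    {H | IsHyperplane M H ∧ F ⊆ H}.encard ≤ 3 := by
  have hBfE : insert x (insert y B₀) ⊆ M.E := hfull.subset_ground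
  have hxE : x ∈ M.E := hBfE (mem_insert _ _)
  have hyE : y ∈ M.E := hBfE (mem_insert_of_mem _ (mem_insert _ _))
  have hxB₀I : M.Indep (insert x B₀) :=
    hfull.indep.subset (insert_subset_insert (subset_insert _ _))
  have hyB₀I : M.Indep (insert y B₀) :=
    hfull.indep.subset (subset_insert _ _)
  set Hx := M.closure (insert x B₀) with hHxdef
  set Hy := M.closure (insert y B₀) with hHydef
  have hxHy : x ∉ Hy := by
    intro hmem
    rcases hyB₀I.mem_closure_iff.1 hmem with hdep | hmem'
    · exact hdep.not_indep hfull.indep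
    · rcases hmem' with h | h
      · exact hxy h
      · exact hx h
  have hyHx : y ∉ Hx := by
    intro hmem
    rcases hxB₀I.mem_closure_iff.1 hmem with hdep | hmem'
    · rw [insert_comm] at hdep
      exact hdep.not_indep hfull.indep
    · rcases hmem' with h | h
      · exact hxy h.symm
      · exact hy h
  have hHyne : Hy ≠ M.E := fun h => hxHy (h ▸ hxE)
  have hHxne : Hx ≠ M.E := fun h => hyHx (h ▸ hyE)
  -- The key claim: two hyperplanes containing F, distinct from Hx and Hy, are equal.
  have key : ∀ H₃, (IsHyperplane M H₃ ∧ F ⊆ H₃) → H₃ ≠ Hx → H₃ ≠ Hy →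
      ∀ H₄, (IsHyperplane M H₄ ∧ F ⊆ H₄) → H₄ ≠ Hx → H₄ ≠ Hy → H₃ = H₄ := by
    rintro H₃ ⟨hH₃, hFH₃⟩ hne3x hne3y H₄ ⟨hH₄, hFH₄⟩ hne4x hne4y
    by_contra hne34
    obtain ⟨z₃, hz₃H, hz₃F, hz₃B₀, hz₃ind, hz₃eq⟩ :=
      hyp_exists_z hF hB₀ hx hy hxy hfull hH₃ hFH₃
    obtain ⟨z₄, hz₄H, hz₄F, hz₄B₀, hz₄ind, hz₄eq⟩ :=
      hyp_exists_z hF hB₀ hx hy hxy hfull hH₄ hFH₄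
    have hxH₃ : x ∉ H₃ := fun h =>
      hne3x (hyp_eq_closure hB₀ hx hy hxy hfull hH₃ hFH₃ h hxB₀I hx)
    have hyH₃ : y ∉ H₃ := fun h =>
      hne3y (hyp_eq_closure hB₀ hx hy hxy hfull hH₃ hFH₃ h hyB₀I hy)
    have hxH₄ : x ∉ H₄ := fun h =>
      hne4x (hyp_eq_closure hB₀ hx hy hxy hfull hH₄ hFH₄ h hxB₀I hx)
    have hyH₄ : y ∉ H₄ := fun h =>
      hne4y (hyp_eq_closure hB₀ hx hy hxy hfull hH₄ hFH₄ h hyB₀I hy)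
    have hz₃H₄ : z₃ ∉ H₄ := fun h => hne34 (by
      rw [hyp_eq_closure hB₀ hx hy hxy hfull hH₄ hFH₄ h hz₃ind hz₃B₀] at hne34 ⊢
      exact hz₃eq)
    have hz₄H₃ : z₄ ∉ H₃ := fun h => hne34 (by
      rw [hyp_eq_closure hB₀ hx hy hxy hfull hH₃ hFH₃ h hz₄ind hz₄B₀]
      exact hz₄eq.symm)
    have hz₃x : z₃ ≠ x := fun h => hxH₃ (h ▸ hz₃H)
    have hz₃y : z₃ ≠ y := fun h => hyH₃ (h ▸ hz₃H)
    have hz₄x : z₄ ≠ x := fun h => hxH₄ (h ▸ hz₄H)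
    have hz₄y : z₄ ≠ y := fun h => hyH₄ (h ▸ hz₄H)
    have hz₃z₄ : z₃ ≠ z₄ := fun h => hz₃H₄ (h ▸ hz₄H)
    have hz₃Bf : z₃ ∉ insert x (insert y B₀) := by simp [hz₃x, hz₃y, hz₃B₀]
    have hz₄Bf : z₄ ∉ insert x (insert y B₀) := by simp [hz₄x, hz₄y, hz₄B₀]
    have hdep₃ : M.Dep (insert z₃ (insert x (insert y B₀))) :=
      hfull.insert_dep ⟨hH₃.1.subset_ground hz₃H, hz₃Bf⟩
    have hdep₄ : M.Dep (insert z₄ (insert x (insert y B₀))) :=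
      hfull.insert_dep ⟨hH₄.1.subset_ground hz₄H, hz₄Bf⟩
    obtain ⟨C₃, hC₃sub, hC₃⟩ := exists_circuit_subset M hdep₃
    obtain ⟨C₄, hC₄sub, hC₄⟩ := exists_circuit_subset M hdep₄
    have hz₃C₃ : z₃ ∈ C₃ := by
      by_contra h
      refine hC₃.1.not_indep (hfull.indep.subset fun a ha => ?_)
      rcases hC₃sub ha with h' | h'
      · exact absurd (h' ▸ ha) h
      · exact h'
    have hz₄C₄ : z₄ ∈ C₄ := by
      by_contra h
      refine hC₄.1.not_indep (hfull.indep.subset fun a ha => ?_)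
      rcases hC₄sub ha with h' | h'
      · exact absurd (h' ▸ ha) h
      · exact h'
    -- both x and y belong to both fundamental circuits
    have hmemC : ∀ H z C, IsHyperplane M H → H = M.closure (insert z B₀) → z ∈ C →
        z ∉ B₀ → C ⊆ insert z (insert x (insert y B₀)) → IsCircuit M C →
        H ≠ Hx → H ≠ Hy → x ∈ C ∧ y ∈ C := by
      rintro H z C hH hzeq hzC hzB₀ hCsub hC hneHx hneHy
      have hB₀cl : ∀ G : Set α, B₀ ⊆ G → M.closure G = G → B₀ ⊆ G := fun G h _ => h
      constructor
      · by_contra hxC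
        have hsuby : C \ {z} ⊆ insert y B₀ := by
          rintro a ⟨haC, haz⟩
          rcases hCsub haC with h | h
          · exact absurd h haz
          · rcases h with h | h
            · exact absurd (h ▸ haC) hxC
            · exact h
        have hzHy : z ∈ Hy :=
          M.closure_subset_closure hsuby (hC.mem_closure_diff hzC)
        have hHsub : H ⊆ Hy := by
          rw [hzeq, hHydef, ← M.closure_closure (insert y B₀)]
          refine M.closure_subset_closure (insert_subset hzHy ?_)
          exact (subset_insert _ _).trans (M.subset_closure _
            (hyB₀I.subset_ground))
        exact hneHy (hyp_eq_of_subset hH (flat_closure M _) hHsub hHyne)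
      · by_contra hyC
        have hsubx : C \ {z} ⊆ insert x B₀ := by
          rintro a ⟨haC, haz⟩
          rcases hCsub haC with h | h
          · exact absurd h haz
          · rcases h with h | h
            · exact mem_insert_iff.2 (Or.inl h)
            · rcases h with h | h
              · exact absurd (h ▸ haC) hyC
              · exact mem_insert_of_mem _ h
        have hzHx : z ∈ Hx :=
          M.closure_subset_closure hsubx (hC.mem_closure_diff hzC)
        have hHsub : H ⊆ Hx := by
          rw [hzeq, hHxdef, ← M.closure_closure (insert x B₀)]
          refine M.closure_subset_closure (insert_subset hzHx ?_)
          exact (subset_insert _ _).trans (M.subset_closure _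
            (hxB₀I.subset_ground))
        exact hneHx (hyp_eq_of_subset hH (flat_closure M _) hHsub hHxne)
    obtain ⟨hxC₃, hyC₃⟩ := hmemC H₃ z₃ C₃ hH₃ hz₃eq hz₃C₃ hz₃B₀ hC₃sub hC₃ hne3x hne3y
    obtain ⟨hxC₄, hyC₄⟩ := hmemC H₄ z₄ C₄ hH₄ hz₄eq hz₄C₄ hz₄B₀ hC₄sub hC₄ hne4x hne4y
    have hz₃C₄ : z₃ ∉ C₄ := by
      intro h
      rcases hC₄sub h with h' | h'
      · exact hz₃z₄ h'
      · exact hz₃Bf h'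
    have hCne : C₃ ≠ C₄ := fun h => hz₃C₄ (h ▸ hz₃C₃)
    obtain ⟨C, hC, hCsd⟩ := hM C₃ C₄ hC₃ hC₄ hCne
    have hCsub : C ⊆ insert z₃ (insert z₄ B₀) := by
      intro a ha
      rcases Set.mem_symmDiff.1 (hCsd ha) with ⟨h₁, h₂⟩ | ⟨h₁, h₂⟩
      · rcases hC₃sub h₁ with h | h
        · exact mem_insert_iff.2 (Or.inl h)
        · rcases h with h | h
          · exact absurd (h ▸ hxC₄) h₂
          · rcases h with h | h
            · exact absurd (h ▸ hyC₄) h₂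
            · exact mem_insert_of_mem _ (mem_insert_of_mem _ h)
      · rcases hC₄sub h₁ with h | h
        · exact mem_insert_of_mem _ (mem_insert_iff.2 (Or.inl h))
        · rcases h with h | h
          · exact absurd (h ▸ hxC₃) h₂
          · rcases h with h | h
            · exact absurd (h ▸ hyC₃) h₂
            · exact mem_insert_of_mem _ (mem_insert_of_mem _ h)
    have hz₄C : z₄ ∈ C := by
      by_contra h
      refine hC.1.not_indep (hz₃ind.subset fun a ha => ?_)
      rcases hCsub ha with h' | h'
      · exact mem_insert_iff.2 (Or.inl h')
      · rcases h' with h' | h'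
        · exact absurd (h' ▸ ha) h
        · exact mem_insert_of_mem _ h'
    have hz₄H₃' : z₄ ∈ H₃ := by
      have hsub' : C \ {z₄} ⊆ insert z₃ B₀ := by
        rintro a ⟨haC, haz⟩
        rcases hCsub haC with h | h
        · exact mem_insert_iff.2 (Or.inl h)
        · rcases h with h | h
          · exact absurd h haz
          · exact mem_insert_of_mem _ h
      have := M.closure_subset_closure hsub' (hC.mem_closure_diff hz₄C)
      rwa [← hz₃eq] at this
    exact hz₄H₃ hz₄H₃'
  -- conclude the cardinality bound
  set T : Set (Set α) := {H | (IsHyperplane M H ∧ F ⊆ H) ∧ H ≠ Hx ∧ H ≠ Hy} with hT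
  have hTcard : T.encard ≤ 1 := by
    rw [Set.encard_le_one_iff]
    rintro a b ⟨ha, hax, hay⟩ ⟨hb, hbx, hby⟩
    exact key a ha hax hay b hb hbx hby
  have hsub : {H | IsHyperplane M H ∧ F ⊆ H} ⊆ insert Hx (insert Hy T) := by
    intro H hH
    by_cases h1 : H = Hx
    · exact mem_insert_iff.2 (Or.inl h1)
    by_cases h2 : H = Hy
    · exact mem_insert_of_mem _ (mem_insert_iff.2 (Or.inl h2))
    exact mem_insert_of_mem _ (mem_insert_of_mem _ ⟨hH, h1, h2⟩)
  calc {H | IsHyperplane M H ∧ F ⊆ H}.encard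
      ≤ (insert Hx (insert Hy T)).encard := encard_mono hsub
    _ ≤ (insert Hy T).encard + 1 := encard_insert_le _ _
    _ ≤ (T.encard + 1) + 1 := add_le_add_left (encard_insert_le _ _) 1
    _ ≤ (1 + 1) + 1 := by gcongr
    _ = 3 := by norm_num
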